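/- arXiv:1309.5714 — 2 statements merged into one kernel-verified Lean document; each statement's English description precedes it below -/
import Mathlib

section
/- Let U ⊂ ℂ be an open set with compact complement. If g₁ and g₂ are both Green functions for U (i.e. each is harmonic on U, has the property that g(z) − log|z| remains bounded as z → ∞, and tends to 0 at every boundary point of U), then g₁ = g₂ on U. -/
/-- A real-valued function on an open set `U ⊆ ℂ` is harmonic if it is locally the
real part of a holomorphic function. -/
def IsHarmonicOn (g : ℂ → ℝ) (U : Set ℂ) : Prop :=
  ∀ z ∈ U, ∃ r > 0, Metric.ball z r ⊆ U ∧
    ∃ f : ℂ → ℂ, DifferentiableOn ℂ f (Metric.ball z r) ∧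
      ∀ w ∈ Metric.ball z r, g w = (f w).re

lemma IsHarmonicOn.continuousOn {g : ℂ → ℝ} {U : Set ℂ}
    (h : IsHarmonicOn g U) (hU : IsOpen U) : ContinuousOn g U := by
  refine fun z hz => (?_ : ContinuousAt g z).continuousWithinAt
  obtain ⟨r, hr, hsub, f, hf, hfg⟩ := h z hz
  have hball : Metric.ball z r ∈ nhds z := Metric.ball_mem_nhds z hr
  have hc : ContinuousAt (fun w => (f w).re) z := by
    have := (hf.continuousOn.continuousAt hball)
    exact (Complex.continuous_re.continuousAt).comp this
  exact hc.congr (Filter.eventuallyEq_of_mem hball fun w hw => (hfg w hw).symm)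

lemma IsHarmonicOn.sub_const_mul {g₁ g₂ : ℂ → ℝ} {U : Set ℂ}
    (h₁ : IsHarmonicOn g₁ U) (h₂ : IsHarmonicOn g₂ U) (c : ℝ) :
    IsHarmonicOn (fun z => g₁ z - c * g₂ z) U := by
  intro z hz
  obtain ⟨r₁, hr₁, hsub₁, f₁, hf₁, hfg₁⟩ := h₁ z hz
  obtain ⟨r₂, hr₂, hsub₂, f₂, hf₂, hfg₂⟩ := h₂ z hz
  refine ⟨min r₁ r₂, lt_min hr₁ hr₂, ?_, fun w => f₁ w - (c : ℂ) * f₂ w, ?_, ?_⟩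
  · exact (Metric.ball_subset_ball (min_le_left _ _)).trans hsub₁
  · exact (hf₁.mono (Metric.ball_subset_ball (min_le_left _ _))).sub
      (((hf₂.mono (Metric.ball_subset_ball (min_le_right _ _)))).const_mul _)
  · intro w hw
    have hw₁ : w ∈ Metric.ball z r₁ := Metric.ball_subset_ball (min_le_left _ _) hw
    have hw₂ : w ∈ Metric.ball z r₂ := Metric.ball_subset_ball (min_le_right _ _) hw
    simp [hfg₁ w hw₁, hfg₂ w hw₂, Complex.sub_re, Complex.mul_re]

/-- Strong maximum principle: the set where a harmonic function attains an interior
maximum value is open. -/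
lemma isOpen_eq_max {u : ℂ → ℝ} {U : Set ℂ} (hu : IsHarmonicOn u U)
    {z₁ : ℂ} (hmax : IsMaxOn u U z₁) :
    IsOpen {w | w ∈ U ∧ u w = u z₁} := by
  rw [Metric.isOpen_iff]
  rintro w ⟨hwU, hwM⟩
  obtain ⟨r, hr, hsub, f, hf, hfg⟩ := hu w hwU
  refine ⟨r, hr, fun x hx => ?_⟩
  have hF : DifferentiableOn ℂ (fun z => Complex.exp (f z)) (Metric.ball w r) :=
    hf.cexp
  have hmax' : IsMaxOn (norm ∘ fun z => Complex.exp (f z)) (Metric.ball w r) w := by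
    intro y hy
    simp only [Set.mem_setOf_eq, Function.comp_apply, Complex.norm_exp]
    rw [← hfg y hy, ← hfg w (Metric.mem_ball_self hr)]
    exact Real.exp_le_exp.2 (hwM ▸ hmax (hsub hy))
  have heq := Complex.eqOn_of_isPreconnected_of_isMaxOn_norm
    (convex_ball w r).isPreconnected Metric.isOpen_ball hF (Metric.mem_ball_self hr) hmax' hx
  have : Real.exp (u x) = Real.exp (u w) := by
    have := congrArg (fun z : ℂ => ‖z‖) heq
    simpa [Complex.norm_exp, hfg x hx, hfg w (Metric.mem_ball_self hr)] using this
  exact ⟨hsub hx, (Real.exp_injective this).trans hwM⟩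

/-- One-sided comparison with an epsilon of room. -/
lemma green_key {U : Set ℂ} (hU : IsOpen U) {g₁ g₂ : ℂ → ℝ}
    (h₁ : IsHarmonicOn g₁ U) (h₂ : IsHarmonicOn g₂ U)
    (hb₁ : ∃ C : ℝ, ∀ᶠ z in Bornology.cobounded ℂ, |g₁ z - Real.log ‖z‖| ≤ C)
    (hb₂ : ∃ C : ℝ, ∀ᶠ z in Bornology.cobounded ℂ, |g₂ z - Real.log ‖z‖| ≤ C)
    (hbd₁ : ∀ ξ ∈ frontier U, Filter.Tendsto g₁ (nhdsWithin ξ U) (nhds 0))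
    (hbd₂ : ∀ ξ ∈ frontier U, Filter.Tendsto g₂ (nhdsWithin ξ U) (nhds 0))
    {ε : ℝ} (hε : 0 < ε) : ∀ z ∈ U, g₁ z - (1 + ε) * g₂ z < ε := by
  obtain ⟨C₁, hC₁⟩ := hb₁
  obtain ⟨C₂, hC₂⟩ := hb₂
  set u : ℂ → ℝ := fun z => g₁ z - (1 + ε) * g₂ z with hu_def
  have hu : IsHarmonicOn u U := h₁.sub_const_mul h₂ (1 + ε)
  have hucont : ContinuousOn u U := hu.continuousOn hU
  -- boundary limits of u are 0
  have hubd : ∀ ξ ∈ frontier U, Filter.Tendsto u (nhdsWithin ξ U) (nhds 0) := by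
    intro ξ hξ
    have := (hbd₁ ξ hξ).sub ((hbd₂ ξ hξ).const_mul (1 + ε))
    simpa using this
  -- eventually (cobounded) u < ε
  have hlog : Filter.Tendsto (fun z : ℂ => Real.log ‖z‖)
      (Bornology.cobounded ℂ) Filter.atTop := by
    have : Filter.Tendsto (fun z : ℂ => ‖z‖) (Bornology.cobounded ℂ) Filter.atTop :=
      tendsto_norm_cobounded_atTop
    exact Real.tendsto_log_atTop.comp this
  have hev : ∀ᶠ z in Bornology.cobounded ℂ, u z < ε := by
    filter_upwards [hC₁, hC₂,
      hlog.eventually_gt_atTop ((C₁ + (1 + ε) * C₂) / ε)] with z hz₁ hz₂ hz₃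
    have hz₁' := abs_le.1 hz₁
    have hz₂' := abs_le.1 hz₂
    have hεpos : (0:ℝ) < 1 + ε := by linarith
    have key : ε * Real.log ‖z‖ > C₁ + (1 + ε) * C₂ := by
      have := (div_lt_iff₀ hε).1 hz₃
      linarith
    simp only [hu_def]
    nlinarith [hz₁'.1, hz₁'.2, hz₂'.1, hz₂'.2]
  -- the set where u ≥ ε
  by_contra hcon
  push_neg at hcon
  obtain ⟨z₀, hz₀U, hz₀⟩ := hcon
  set T : Set ℂ := {z | z ∈ U ∧ ε ≤ u z} with hT_def
  have hz₀T : z₀ ∈ T := ⟨hz₀U, hz₀⟩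
  have hTbdd : Bornology.IsBounded T := by
    have : T ⊆ {z | u z < ε}ᶜ := fun z hz hz' => absurd hz' (not_lt.2 hz.2)
    have hcb : Bornology.IsCobounded {z : ℂ | u z < ε} := hev
    exact hcb.compl.subset fun z hz hz' => absurd hz.2 (not_le.2 hz')
  have hclT : closure T ⊆ U := by
    intro ξ hξ
    by_contra hξU
    have hξcl : ξ ∈ closure U := closure_mono (fun z hz => hz.1) hξ
    have hξfr : ξ ∈ frontier U := ⟨hξcl, by rwa [hU.interior_eq]⟩
    have hne : (nhdsWithin ξ T).NeBot := mem_closure_iff_nhdsWithin_neBot.1 hξ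
    have hten : Filter.Tendsto u (nhdsWithin ξ T) (nhds 0) :=
      (hubd ξ hξfr).mono_left (nhdsWithin_mono ξ fun z hz => hz.1)
    have : ε ≤ 0 := ge_of_tendsto hten
      (Filter.eventually_inf_principal.2 (Filter.Eventually.of_forall fun z hz => hz.2))
    linarith
  have hTcpt : IsCompact (closure T) :=
    Metric.isCompact_of_isClosed_isBounded isClosed_closure hTbdd.closure
  obtain ⟨z₁, hz₁cl, hz₁max⟩ := hTcpt.exists_isMaxOn ⟨z₀, subset_closure hz₀T⟩
    (hucont.mono hclT)
  have hz₁U : z₁ ∈ U := hclT hz₁cl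
  have hMε : ε ≤ u z₁ := le_trans hz₀ (hz₁max (subset_closure hz₀T))
  have hmax : IsMaxOn u U z₁ := by
    intro w hw
    rcases le_or_gt ε (u w) with h | h
    · exact hz₁max (subset_closure ⟨hw, h⟩)
    · exact le_trans h.le hMε
  set S : Set ℂ := {w | w ∈ U ∧ u w = u z₁} with hS_def
  have hSopen : IsOpen S := isOpen_eq_max hu hmax
  have hSsub : S ⊆ T := fun w hw => ⟨hw.1, hw.2 ▸ hMε⟩
  have hSne : S.Nonempty := ⟨z₁, hz₁U, rfl⟩
  -- S is clopen in ℂ: its closure points in U belong to S by continuity,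
  -- and its closure is contained in U.
  have hSclosed : IsClosed S := by
    rw [← closure_eq_iff_isClosed]
    refine Set.Subset.antisymm (fun ξ hξ => ?_) subset_closure
    have hξU : ξ ∈ U := hclT (closure_mono hSsub hξ)
    have hne : (nhdsWithin ξ S).NeBot := mem_closure_iff_nhdsWithin_neBot.1 hξ
    have hcont : Filter.Tendsto u (nhdsWithin ξ S) (nhds (u ξ)) :=
      ((hucont.continuousAt (hU.mem_nhds hξU)).tendsto).mono_left nhdsWithin_le_nhds
    have hconst : Filter.Tendsto u (nhdsWithin ξ S) (nhds (u z₁)) := by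
      refine Filter.Tendsto.congr' ?_ tendsto_const_nhds
      exact Filter.eventually_inf_principal.2 (Filter.Eventually.of_forall fun z hz => hz.2.symm)
    exact ⟨hξU, tendsto_nhds_unique hcont hconst⟩
  have : S = Set.univ := (IsClopen.eq_univ ⟨hSclosed, hSopen⟩ hSne : S = Set.univ)
  have : Bornology.IsBounded (Set.univ : Set ℂ) := this ▸ hTbdd.subset hSsub
  exact absurd this (NormedSpace.unbounded_univ ℝ ℂ)

lemma green_le {U : Set ℂ} (hU : IsOpen U) {g₁ g₂ : ℂ → ℝ}
    (h₁ : IsHarmonicOn g₁ U) (h₂ : IsHarmonicOn g₂ U)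
    (hb₁ : ∃ C : ℝ, ∀ᶠ z in Bornology.cobounded ℂ, |g₁ z - Real.log ‖z‖| ≤ C)
    (hb₂ : ∃ C : ℝ, ∀ᶠ z in Bornology.cobounded ℂ, |g₂ z - Real.log ‖z‖| ≤ C)
    (hbd₁ : ∀ ξ ∈ frontier U, Filter.Tendsto g₁ (nhdsWithin ξ U) (nhds 0))
    (hbd₂ : ∀ ξ ∈ frontier U, Filter.Tendsto g₂ (nhdsWithin ξ U) (nhds 0))
    {z : ℂ} (hz : z ∈ U) : g₁ z ≤ g₂ z := by
  have key : ∀ ε : ℝ, 0 < ε → g₁ z ≤ g₂ z + ε * (g₂ z + 1) := by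
    intro ε hε
    have := green_key hU h₁ h₂ hb₁ hb₂ hbd₁ hbd₂ hε z hz
    nlinarith
  by_contra hlt
  push_neg at hlt
  rcases le_or_gt (g₂ z + 1) 0 with h | h
  · have := key 1 one_pos; linarith
  · have := key ((g₁ z - g₂ z) / (2 * (g₂ z + 1)))
      (div_pos (by linarith) (by linarith))
    rw [div_mul_eq_mul_div, mul_div_assoc] at this
    have h2 : (g₂ z + 1) / (2 * (g₂ z + 1)) = 1 / 2 := by
      field_simp
    rw [h2] at this
    linarith

/-- Uniqueness of the Green function: if `U ⊆ ℂ` is open with compact complement and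
`g₁, g₂` are both Green functions for `U` (positive, harmonic on `U`, with
`g(z) − log|z|` bounded at infinity and boundary limit `0`), then `g₁ = g₂` on `U`. -/
theorem green_function_unique (U : Set ℂ) (hU : IsOpen U) (hKc : IsCompact Uᶜ)
    (g₁ g₂ : ℂ → ℝ)
    (hpos₁ : ∀ z ∈ U, 0 < g₁ z) (hpos₂ : ∀ z ∈ U, 0 < g₂ z)
    (h₁ : IsHarmonicOn g₁ U) (h₂ : IsHarmonicOn g₂ U)
    (hb₁ : ∃ C : ℝ, ∀ᶠ z in Bornology.cobounded ℂ, |g₁ z - Real.log ‖z‖| ≤ C)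
    (hb₂ : ∃ C : ℝ, ∀ᶠ z in Bornology.cobounded ℂ, |g₂ z - Real.log ‖z‖| ≤ C)
    (hbd₁ : ∀ ξ ∈ frontier U, Filter.Tendsto g₁ (nhdsWithin ξ U) (nhds 0))
    (hbd₂ : ∀ ξ ∈ frontier U, Filter.Tendsto g₂ (nhdsWithin ξ U) (nhds 0)) :
    Set.EqOn g₁ g₂ U := fun z hz =>
  le_antisymm (green_le hU h₁ h₂ hb₁ hb₂ hbd₁ hbd₂ hz)
    (green_le hU h₂ h₁ hb₂ hb₁ hbd₂ hbd₁ hz)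
end

section
/- Let f : ℂ³ → ℂ³ be continuously differentiable, K⁺ = {m : supₙ ‖fⁿ(m)‖ < ∞} nonempty, and suppose R₀ > 0 is such that ‖fⁿ(z₀)‖ ≤ R₀ for all n ≥ 0 and all z₀ ∈ K⁺. Fix R ≥ R₀ + 1, set H(R) = sup_{‖z‖≤R} ‖df(z)‖, and assume H(R) > 1. If z₁ ∉ K⁺, z₀ ∈ K⁺ realizes the distance d(z₁, K⁺) = ‖z₁ − z₀‖, and N = min{n ≥ 0 : ‖fⁿ(z₁)‖ > R} is finite, then H(R)^N · d(z₁, K⁺) ≥ 1. -/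
/-- Fornaess–Sibony type estimate: if `z₁ ∉ K⁺`, `z₀ ∈ K⁺` realizes
`d(z₁,K⁺) = ‖z₁ − z₀‖`, orbits in `K⁺` stay in the ball of radius `R₀`,
`R ≥ R₀ + 1`, `H(R) = sup_{‖z‖≤R} ‖df(z)‖ > 1`, and
`N = min{n : ‖fⁿ(z₁)‖ > R}`, then `H(R)^N · d(z₁,K⁺) ≥ 1`. -/
theorem escape_time_distance_estimate
    (f : EuclideanSpace ℂ (Fin 3) → EuclideanSpace ℂ (Fin 3))
    (hf : ContDiff ℝ 1 f)
    (Kp : Set (EuclideanSpace ℂ (Fin 3)))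
    (hKp : Kp = {m | ∃ M : ℝ, ∀ n : ℕ, ‖f^[n] m‖ ≤ M})
    (hne : Kp.Nonempty)
    (R₀ : ℝ) (hR₀ : 0 < R₀) (hbd : ∀ z₀ ∈ Kp, ∀ n : ℕ, ‖f^[n] z₀‖ ≤ R₀)
    (R : ℝ) (hR : R₀ + 1 ≤ R)
    (HR : ℝ)
    (hHR : HR = sSup ((fun z => ‖fderiv ℝ f z‖) ''
      Metric.closedBall (0 : EuclideanSpace ℂ (Fin 3)) R))
    (hHR1 : 1 < HR)
    (z₁ z₀ : EuclideanSpace ℂ (Fin 3)) (hz₁ : z₁ ∉ Kp) (hz₀ : z₀ ∈ Kp)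
    (hdist : Metric.infDist z₁ Kp = ‖z₁ - z₀‖)
    (N : ℕ) (hN : R < ‖f^[N] z₁‖) (hNmin : ∀ n < N, ‖f^[n] z₁‖ ≤ R) :
    1 ≤ HR ^ N * Metric.infDist z₁ Kp := by
  have hR0R : R₀ ≤ R := by linarith
  -- derivative bound on the ball
  have hcont : Continuous fun z => ‖fderiv ℝ f z‖ :=
    (hf.continuous_fderiv one_ne_zero).norm
  have hbdd : BddAbove ((fun z => ‖fderiv ℝ f z‖) ''
      Metric.closedBall (0 : EuclideanSpace ℂ (Fin 3)) R) :=
    ((isCompact_closedBall _ _).image hcont).bddAbove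
  have hderiv : ∀ z ∈ Metric.closedBall (0 : EuclideanSpace ℂ (Fin 3)) R,
      ‖fderiv ℝ f z‖ ≤ HR := by
    intro z hz
    rw [hHR]
    exact le_csSup hbdd ⟨z, hz, rfl⟩
  have hlip : ∀ x ∈ Metric.closedBall (0 : EuclideanSpace ℂ (Fin 3)) R,
      ∀ y ∈ Metric.closedBall (0 : EuclideanSpace ℂ (Fin 3)) R,
      ‖f x - f y‖ ≤ HR * ‖x - y‖ := by
    intro x hx y hy
    exact (convex_closedBall _ _).norm_image_sub_le_of_norm_fderiv_le
      (fun z _ => hf.differentiable one_ne_zero z)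
      (fun z hz => hderiv z hz) hy hx
  -- orbit of z₀ stays in the ball
  have hz0ball : ∀ k : ℕ, f^[k] z₀ ∈
      Metric.closedBall (0 : EuclideanSpace ℂ (Fin 3)) R := by
    intro k
    rw [Metric.mem_closedBall, dist_zero_right]
    exact le_trans (hbd z₀ hz₀ k) hR0R
  have key : ∀ k ≤ N, ‖f^[k] z₁ - f^[k] z₀‖ ≤ HR ^ k * ‖z₁ - z₀‖ := by
    intro k
    induction k with
    | zero => intro _; simp
    | succ k ih =>
      intro hk
      have hkN : k < N := Nat.lt_of_succ_le hk
      have hz1ball : f^[k] z₁ ∈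
          Metric.closedBall (0 : EuclideanSpace ℂ (Fin 3)) R := by
        rw [Metric.mem_closedBall, dist_zero_right]
        exact hNmin k hkN
      calc ‖f^[k+1] z₁ - f^[k+1] z₀‖
          = ‖f (f^[k] z₁) - f (f^[k] z₀)‖ := by
            rw [Function.iterate_succ_apply', Function.iterate_succ_apply']
        _ ≤ HR * ‖f^[k] z₁ - f^[k] z₀‖ := hlip _ hz1ball _ (hz0ball k)
        _ ≤ HR * (HR ^ k * ‖z₁ - z₀‖) := by
            exact mul_le_mul_of_nonneg_left (ih hkN.le) (by linarith)
        _ = HR ^ (k+1) * ‖z₁ - z₀‖ := by ring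
  have hmain := key N le_rfl
  have h1 : ‖f^[N] z₁‖ - ‖f^[N] z₀‖ ≤ ‖f^[N] z₁ - f^[N] z₀‖ :=
    norm_sub_norm_le _ _
  have h2 : ‖f^[N] z₀‖ ≤ R₀ := hbd z₀ hz₀ N
  rw [hdist]
  linarith
end
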